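/- Let q be a positive integer, π a q-dimensional probability vector, and γ a q-dimensional vector with entries in [0,1]. Then the L² operator norm of the matrix M = (diag(π) − π πᵀ) diag(γ) satisfies ‖M‖₂ ≤ (1/2) max_{j∈[q]} π_j (1 + γ_j²). -/

import Mathlib

lemma stmt0_cs (q : ℕ) (π : Fin q → ℝ) (hπ0 : ∀ j, 0 ≤ π j) (hπ1 : ∑ j, π j = 1)
    (w : Fin q → ℝ) : (∑ i, π i * w i) ^ 2 ≤ ∑ i, π i * w i ^ 2 := by
  have h := Finset.sum_mul_sq_le_sq_mul_sq Finset.univ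
    (fun i => Real.sqrt (π i)) (fun i => Real.sqrt (π i) * w i)
  have e1 : ∀ i : Fin q, Real.sqrt (π i) * (Real.sqrt (π i) * w i) = π i * w i := by
    intro i; rw [← mul_assoc, Real.mul_self_sqrt (hπ0 i)]
  have e2 : ∀ i : Fin q, (Real.sqrt (π i)) ^ 2 = π i := fun i => Real.sq_sqrt (hπ0 i)
  have e3 : ∀ i : Fin q, (Real.sqrt (π i) * w i) ^ 2 = π i * w i ^ 2 := by
    intro i; rw [mul_pow, e2]
  simp only [e1, e2, e3, hπ1, one_mul] at h
  exact h

lemma stmt0_key (q : ℕ) (π γ : Fin q → ℝ)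
    (hπ0 : ∀ j, 0 ≤ π j) (hπ1 : ∑ j, π j = 1) (K : ℝ)
    (hK : ∀ j, π j * (1 + (γ j) ^ 2) ≤ K) (u v : Fin q → ℝ) :
    ∑ i, u i * (π i * (γ i * v i) - π i * ∑ j, π j * (γ j * v j))
      ≤ K / 4 * ((∑ i, u i ^ 2) + (∑ i, v i ^ 2)) := by
  have hL : ∑ i, u i * (π i * (γ i * v i) - π i * ∑ j, π j * (γ j * v j))
      = (∑ i, π i * (γ i * u i * v i))
        - (∑ i, π i * u i) * (∑ j, π j * (γ j * v j)) := by
    rw [Finset.sum_mul, ← Finset.sum_sub_distrib]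
    apply Finset.sum_congr rfl
    intro i _
    ring
  have h1 := stmt0_cs q π hπ0 hπ1 (fun i => u i - γ i * v i)
  have e1 : (∑ i, π i * (u i + γ i * v i) ^ 2)
      = (∑ i, π i * u i ^ 2) + 2 * (∑ i, π i * (γ i * u i * v i))
        + (∑ i, π i * (γ i * v i) ^ 2) :=
    calc (∑ i, π i * (u i + γ i * v i) ^ 2)
        = ∑ i, (π i * u i ^ 2 + 2 * (π i * (γ i * u i * v i))
            + π i * (γ i * v i) ^ 2) := Finset.sum_congr rfl (by intros; ring)
      _ = _ := by rw [Finset.sum_add_distrib, Finset.sum_add_distrib, Finset.mul_sum]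
  have e2 : (∑ i, π i * (u i - γ i * v i) ^ 2)
      = (∑ i, π i * u i ^ 2) - 2 * (∑ i, π i * (γ i * u i * v i))
        + (∑ i, π i * (γ i * v i) ^ 2) :=
    calc (∑ i, π i * (u i - γ i * v i) ^ 2)
        = ∑ i, (π i * u i ^ 2 - 2 * (π i * (γ i * u i * v i))
            + π i * (γ i * v i) ^ 2) := Finset.sum_congr rfl (by intros; ring)
      _ = _ := by
            rw [Finset.sum_add_distrib, Finset.sum_sub_distrib, Finset.mul_sum]
  have e4 : (∑ i, π i * (u i - γ i * v i))
      = (∑ i, π i * u i) - (∑ i, π i * (γ i * v i)) := by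
    rw [← Finset.sum_sub_distrib]; apply Finset.sum_congr rfl; intro i _; ring
  have h2 : (0:ℝ) ≤ ((∑ i, π i * u i) + (∑ i, π i * (γ i * v i))) ^ 2 := sq_nonneg _
  have h3 : (∑ i, π i * (u i + γ i * v i) ^ 2)
      ≤ K * ((∑ i, u i ^ 2) + (∑ i, v i ^ 2)) := by
    rw [← Finset.sum_add_distrib, Finset.mul_sum]
    apply Finset.sum_le_sum
    intro i _
    have hp := hπ0 i
    have hk := hK i
    nlinarith [sq_nonneg (γ i * u i - v i), sq_nonneg (u i), sq_nonneg (v i),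
      mul_nonneg hp (sq_nonneg (γ i * u i - v i))]
  rw [e2, e4] at h1
  rw [e1] at h3
  rw [hL]
  nlinarith [h1, h2, h3]

/-- Let `q` be a positive integer, `π` a `q`-dimensional probability vector,
and `γ` a `q`-dimensional vector with entries in `[0,1]`. Then the L² operator norm of the
matrix `M = (diag π - π πᵀ) * diag γ` satisfies
`‖M‖₂ ≤ (1/2) * max_j π_j (1 + γ_j²)`. -/
theorem stmt0 (q : ℕ) (hq : 0 < q) (π γ : Fin q → ℝ)
    (hπ0 : ∀ j, 0 ≤ π j) (hπ1 : ∑ j, π j = 1)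
    (hγ : ∀ j, γ j ∈ Set.Icc (0 : ℝ) 1) :
    ‖Matrix.toEuclideanCLM (𝕜 := ℝ)
        ((Matrix.diagonal π - Matrix.of (fun i j => π i * π j)) * Matrix.diagonal γ)‖
      ≤ (1 / 2) * Finset.univ.sup' ⟨⟨0, hq⟩, Finset.mem_univ _⟩
          (fun j => π j * (1 + (γ j) ^ 2)) := by
  set M := (Matrix.diagonal π - Matrix.of (fun i j => π i * π j)) * Matrix.diagonal γ with hM
  set K := Finset.univ.sup' ⟨⟨0, hq⟩, Finset.mem_univ _⟩
      (fun j => π j * (1 + (γ j) ^ 2)) with hKdef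
  have hK : ∀ j, π j * (1 + (γ j) ^ 2) ≤ K := by
    intro j; rw [hKdef]
    exact Finset.le_sup' (fun j => π j * (1 + (γ j) ^ 2)) (Finset.mem_univ j)
  have hK0 : (0:ℝ) ≤ K := by
    refine le_trans ?_ (hK ⟨0, hq⟩)
    have := hπ0 ⟨0, hq⟩
    positivity
  -- coordinates of the image
  have hy : ∀ (x : EuclideanSpace ℝ (Fin q)) (i : Fin q),
      (Matrix.toEuclideanCLM (𝕜 := ℝ) M x) i
        = π i * (γ i * x i) - π i * ∑ j, π j * (γ j * x j) := by
    intro x i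
    have h := Matrix.ofLp_toEuclideanCLM (𝕜 := ℝ) M x
    have h2 := congrFun h i
    rw [h2]
    calc _ = ∑ j, ((if i = j then π i else 0) - π i * π j) * γ j * x j := by
          simp [hM, Matrix.mulVec, dotProduct, Matrix.mul_diagonal,
            Matrix.sub_apply, Matrix.diagonal_apply, Matrix.of_apply, mul_assoc]
      _ = (∑ j, (if i = j then π i * (γ j * x j) else 0))
            - ∑ j, π i * (π j * (γ j * x j)) := by
          rw [← Finset.sum_sub_distrib]
          refine Finset.sum_congr rfl fun j _ => ?_
          by_cases h : i = j <;> simp [h] <;> ring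
      _ = π i * (γ i * x i) - π i * ∑ j, π j * (γ j * x j) := by
          rw [← Finset.mul_sum, Finset.sum_ite_eq]
          simp
  -- operator norm bound
  apply ContinuousLinearMap.opNorm_le_bound _ (by positivity)
  intro x
  by_cases h0 : (Matrix.toEuclideanCLM (𝕜 := ℝ) M) x = 0
  · rw [h0, norm_zero]; positivity
  · set y : EuclideanSpace ℝ (Fin q) := (Matrix.toEuclideanCLM (𝕜 := ℝ) M) x with hydef
    have hyn : 0 < ‖y‖ := norm_pos_iff.mpr h0
    have hxn : 0 < ‖x‖ := by
      rcases eq_or_lt_of_le (norm_nonneg x) with h | h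
      · exfalso
        apply h0
        have hx0 : x = 0 := by rw [← norm_eq_zero]; exact h.symm
        rw [hydef, hx0, map_zero]
      · exact h
    have hny : ‖y‖ ^ 2 = ∑ i, (y i) ^ 2 := by
      rw [EuclideanSpace.norm_eq, Real.sq_sqrt (by positivity)]
      simp [sq_abs]
    have hnx : ‖x‖ ^ 2 = ∑ i, (x i) ^ 2 := by
      rw [EuclideanSpace.norm_eq, Real.sq_sqrt (by positivity)]
      simp [sq_abs]
    set c : ℝ := ‖x‖ / ‖y‖ with hcdef
    have hkey := stmt0_key q π γ hπ0 hπ1 K hK (fun i => c * y i) (fun i => x i)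
    have hL : ∑ i, (c * y i) * (π i * (γ i * x i) - π i * ∑ j, π j * (γ j * x j))
        = c * ∑ i, (y i) ^ 2 := by
      rw [Finset.mul_sum]
      refine Finset.sum_congr rfl fun i _ => ?_
      rw [← hy x i, ← hydef]
      ring
    have hU : ∑ i, (c * y i) ^ 2 = c ^ 2 * ∑ i, (y i) ^ 2 := by
      rw [Finset.mul_sum]
      exact Finset.sum_congr rfl fun i _ => by ring
    rw [hL, hU, ← hny, ← hnx] at hkey
    have e1 : c * ‖y‖ ^ 2 = ‖x‖ * ‖y‖ := by
      rw [hcdef]; field_simp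
    have e2 : c ^ 2 * ‖y‖ ^ 2 = ‖x‖ ^ 2 := by
      rw [hcdef]; field_simp
    rw [e1, e2] at hkey
    nlinarith [hkey, hxn, hyn]
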